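/- There is no continuous open surjection from the closed unit interval [0,1] onto the square [0,1]². -/

import Mathlib

open Metric Set

/-- There is no continuous open surjection from `[0,1]` onto `[0,1]²`. -/
theorem stmt8 :
    ¬ ∃ f : unitInterval → unitInterval × unitInterval,
        Continuous f ∧ IsOpenMap f ∧ Function.Surjective f := by
  rintro ⟨f, hc, ho, hs⟩
  set p₀ : unitInterval × unitInterval := (⟨1/2, by norm_num⟩, ⟨1/2, by norm_num⟩) with hp₀
  obtain ⟨x, hx⟩ := hs p₀
  obtain ⟨δ, hδ, hδf⟩ := Metric.continuous_iff.mp hc x (1/8) (by norm_num)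
  set U : Set unitInterval := Metric.ball x δ with hU
  set e : unitInterval × unitInterval → ℝ × ℝ := fun q => (q.1.1, q.2.1) with he
  have hecont : Continuous e := by fun_prop
  set g : unitInterval → ℝ × ℝ := e ∘ f with hg
  have hgcont : Continuous g := hecont.comp hc
  set W : Set (ℝ × ℝ) := g '' U with hWdef
  -- coordinates of points of W lie in (0,1)
  have hcoord : ∀ y ∈ U, (g y).1 ∈ Set.Ioo (0:ℝ) 1 ∧ (g y).2 ∈ Set.Ioo (0:ℝ) 1 := by
    intro y hy
    have h := hδf y hy
    rw [hx, Prod.dist_eq, max_lt_iff] at h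
    obtain ⟨h1, h2⟩ := h
    rw [Subtype.dist_eq, Real.dist_eq] at h1 h2
    have h1' := abs_lt.mp h1
    have h2' := abs_lt.mp h2
    simp only [hp₀] at h1' h2'
    constructor <;> constructor <;> simp only [hg, he, Function.comp_apply] <;>
      [linarith [h1'.1]; linarith [h1'.2]; linarith [h2'.1]; linarith [h2'.2]]
  -- W is open in ℝ × ℝ
  have hfU : IsOpen (f '' U) := ho U isOpen_ball
  have hemb : Topology.IsInducing e :=
    Topology.IsInducing.subtypeVal.prodMap Topology.IsInducing.subtypeVal
  obtain ⟨V, hV, hVeq⟩ := hemb.isOpen_iff.mp hfU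
  have hWe : W = e '' (f '' U) := by rw [hWdef, hg, Set.image_comp]
  have hWopen : IsOpen W := by
    have : W = V ∩ (Set.Ioo (0:ℝ) 1 ×ˢ Set.Ioo (0:ℝ) 1) := by
      apply Set.Subset.antisymm
      · rintro w ⟨y, hy, rfl⟩
        refine ⟨?_, ?_⟩
        · have : f y ∈ f '' U := ⟨y, hy, rfl⟩
          rw [← hVeq] at this
          exact this
        · obtain ⟨c1, c2⟩ := hcoord y hy
          exact ⟨c1, c2⟩
      · rintro w ⟨hwV, hw1, hw2⟩
        have hwr : w ∈ Set.range e := by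
          refine ⟨(⟨w.1, ⟨le_of_lt hw1.1, le_of_lt hw1.2⟩⟩, ⟨w.2, ⟨le_of_lt hw2.1, le_of_lt hw2.2⟩⟩), ?_⟩
          simp [he]
        rw [hWe, ← hVeq, Set.image_preimage_eq_inter_range]
        exact ⟨hwV, hwr⟩
    rw [this]
    exact hV.inter ((isOpen_Ioo).prod (isOpen_Ioo))
  -- closure of W is contained in the image of closure U
  have hclU : IsCompact (closure U) := isClosed_closure.isCompact
  have hgclU : IsCompact (g '' closure U) := hclU.image hgcont
  have hsub : closure W ⊆ g '' closure U :=
    closure_minimal (Set.image_mono subset_closure) hgclU.isClosed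
  -- the sphere is finite
  have hsph : (Metric.sphere x δ).Finite := by
    apply Set.Finite.subset (Set.Finite.preimage (Set.injOn_of_injective Subtype.val_injective)
      (((Set.finite_singleton ((x:ℝ) - δ)).insert ((x:ℝ) + δ)) :
        ({(x:ℝ) + δ, (x:ℝ) - δ} : Set ℝ).Finite))
    intro a ha
    simp only [Metric.mem_sphere, Subtype.dist_eq, Real.dist_eq] at ha
    rcases (abs_eq (ha ▸ abs_nonneg _)).mp ha with h | h
    · simp only [Set.mem_preimage, Set.mem_insert_iff, Set.mem_singleton_iff]; left; linarith
    · simp only [Set.mem_preimage, Set.mem_insert_iff, Set.mem_singleton_iff]; right; linarith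
  -- frontier of W is contained in the image of the sphere
  have hfr : frontier W ⊆ g '' Metric.sphere x δ := by
    rw [hWopen.frontier_eq]
    rintro z ⟨hz1, hz2⟩
    obtain ⟨y, hy, rfl⟩ := hsub hz1
    have hyU : y ∉ U := fun h => hz2 ⟨y, h, rfl⟩
    have hyd : dist y x = δ := by
      have h1 : dist y x ≤ δ := Metric.closure_ball_subset_closedBall hy
      have h2 : ¬ dist y x < δ := hyU
      linarith [lt_or_eq_of_le h1, not_lt.mp h2]
    exact ⟨y, hyd, rfl⟩
  have hfrc : (frontier W).Countable := Set.Countable.mono hfr ((hsph.image g).countable)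
  have hrank : (1:Cardinal) < Module.rank ℝ (ℝ × ℝ) := by
    rw [rank_prod', Module.rank_self]; norm_num
  have hconn : IsConnected (frontier W)ᶜ :=
    hfrc.isConnected_compl_of_one_lt_rank hrank
  -- disconnection
  have hgx : g x ∈ W := ⟨x, Metric.mem_ball_self hδ, rfl⟩
  have h5 : ((5:ℝ), (5:ℝ)) ∉ closure W := by
    intro h
    obtain ⟨y, _, hy⟩ := hsub h
    have : (g y).1 = 5 := by rw [hy]
    have h01 : ((f y).1 : ℝ) ≤ 1 := (f y).1.2.2
    simp only [hg, he, Function.comp_apply] at this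
    linarith
  have hfreq : frontier W = closure W \ W := hWopen.frontier_eq
  have hcover : (frontier W)ᶜ ⊆ W ∪ (closure W)ᶜ := by
    intro z hz
    rw [Set.mem_compl_iff, hfreq] at hz
    by_cases h : z ∈ closure W
    · left
      by_contra hzW
      exact hz ⟨h, hzW⟩
    · right; exact h
  obtain ⟨z, _, hzW, hzc⟩ := hconn.isPreconnected W (closure W)ᶜ hWopen
    isClosed_closure.isOpen_compl hcover
    ⟨g x, fun hf => (hfreq ▸ hf).2 hgx, hgx⟩
    ⟨((5:ℝ), (5:ℝ)), fun hf => h5 (hfreq ▸ hf).1, h5⟩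
  exact hzc (subset_closure hzW)
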